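/- arXiv:2307.00499 — 2 statements merged into one kernel-verified Lean document; each statement's English description precedes it below -/
import Mathlib

section
/- Let (a(n))_{n≥1} be a sequence of complex numbers with only finitely many a(n) nonzero, and let l be a positive integer. Then E|∑_{n≥1} a(n) f(n)/√n|^{2l} ≤ (∑_{n≥1} |a(n)|² τ_l(n)/n)^l. -/
open MeasureTheory ProbabilityTheory Filter

/-- The uniform (Steinhaus) distribution on the complex unit circle, realized as the
pushforward of normalized Lebesgue measure on `(0, 2π]` under `θ ↦ exp(iθ)`. -/
noncomputable def steinhausMeasure : Measure ℂ :=
  Measure.map (fun θ : ℝ => Complex.exp (Complex.I * θ))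
    ((ENNReal.ofReal (2 * Real.pi))⁻¹ • volume.restrict (Set.Ioc 0 (2 * Real.pi)))

/-- `f : Ω → ℕ → ℂ` is a Steinhaus random multiplicative function w.r.t. `μ`:
each `f · n` is measurable, `f ω` is completely multiplicative (on positive integers),
the values at primes lie on the unit circle, are independent,
and each is uniformly distributed on the unit circle. -/
structure IsSteinhausRMF {Ω : Type*} [MeasurableSpace Ω] (μ : Measure Ω)
    (f : Ω → ℕ → ℂ) : Prop where
  meas : ∀ n : ℕ, Measurable fun ω => f ω n
  map_one : ∀ ω, f ω 1 = 1
  map_mul : ∀ ω, ∀ m n : ℕ, 0 < m → 0 < n → f ω (m * n) = f ω m * f ω n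
  norm_prime : ∀ ω, ∀ p : ℕ, p.Prime → ‖f ω p‖ = 1
  indep : iIndepFun (fun (p : {q : ℕ // q.Prime}) ω => f ω p.1) μ
  unif : ∀ p : ℕ, p.Prime → Measure.map (fun ω => f ω p) μ = steinhausMeasure

/-- The `l`-fold divisor function: `tauk l n = #{(a₁,…,a_l) : a₁⋯a_l = n}`
(tuples of positive integers, which for `n ≥ 1` necessarily lie in `[1,n]`). -/
def tauk (l n : ℕ) : ℕ :=
  ((Fintype.piFinset fun _ : Fin l => Finset.Icc 1 n).filter fun v => ∏ i, v i = n).card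

lemma steinhaus_meas_conj_mul (a b : ℕ) :
    Measurable fun z : ℂ => z ^ a * (starRingEnd ℂ z) ^ b :=
  (measurable_id.pow_const a).mul (Complex.continuous_conj.measurable.pow_const b)

lemma steinhaus_moment (a b : ℕ) :
    ∫ z, z ^ a * (starRingEnd ℂ z) ^ b ∂steinhausMeasure = if a = b then 1 else 0 := by
  have hmexp : Measurable fun θ : ℝ => Complex.exp (Complex.I * θ) := by fun_prop
  rw [steinhausMeasure, integral_map hmexp.aemeasurable
    (steinhaus_meas_conj_mul a b).aestronglyMeasurable]
  have hkey : ∀ θ : ℝ, Complex.exp (Complex.I * θ) ^ a *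
      (starRingEnd ℂ (Complex.exp (Complex.I * θ))) ^ b
      = Complex.exp ((((a : ℂ) - b) * Complex.I) * θ) := by
    intro θ
    rw [← Complex.exp_nat_mul, ← Complex.exp_conj, ← Complex.exp_nat_mul, ← Complex.exp_add]
    congr 1
    simp [Complex.conj_ofReal, mul_comm]
    ring
  simp_rw [hkey]
  rw [integral_smul_measure]
  have h2pi : (0:ℝ) ≤ 2 * Real.pi := by positivity
  rw [← intervalIntegral.integral_of_le h2pi]
  rw [ENNReal.toReal_inv, ENNReal.toReal_ofReal h2pi]
  rcases eq_or_ne a b with h | h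
  · subst h
    simp only [sub_self, zero_mul, Complex.exp_zero, if_true]
    rw [intervalIntegral.integral_const]
    simp only [sub_zero, Complex.real_smul, smul_eq_mul]
    rw [mul_one, ← Complex.ofReal_mul, inv_mul_cancel₀ (by positivity)]
    simp
  · have hc : ((a : ℂ) - b) * Complex.I ≠ 0 := by
      apply mul_ne_zero _ Complex.I_ne_zero
      exact sub_ne_zero.mpr (fun hh => h (Nat.cast_injective hh))
    rw [integral_exp_mul_complex hc]
    have h1 : Complex.exp (((a : ℂ) - b) * Complex.I * ((2 * Real.pi : ℝ) : ℂ)) = 1 := by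
      have := Complex.exp_int_mul_two_pi_mul_I ((a : ℤ) - b)
      rw [← this]
      congr 1
      push_cast
      ring
    rw [h1]
    simp [h]

instance : IsProbabilityMeasure steinhausMeasure := by
  have hmexp : Measurable fun θ : ℝ => Complex.exp (Complex.I * θ) := by fun_prop
  have : IsProbabilityMeasure
      ((ENNReal.ofReal (2 * Real.pi))⁻¹ • volume.restrict (Set.Ioc 0 (2 * Real.pi))) := by
    constructor
    rw [Measure.smul_apply, Measure.restrict_apply MeasurableSet.univ]
    simp only [Set.univ_inter, Real.volume_Ioc, sub_zero, smul_eq_mul]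
    rw [ENNReal.inv_mul_cancel]
    · simp only [ne_eq, ENNReal.ofReal_eq_zero, not_le]
      positivity
    · exact ENNReal.ofReal_ne_top
  exact Measure.isProbabilityMeasure_map hmexp.aemeasurable

lemma integral_complex_decomp {Ω : Type*} [MeasurableSpace Ω] {μ : Measure Ω}
    {Z : Ω → ℂ} (hZ : Integrable Z μ) :
    ∫ ω, Z ω ∂μ = ((∫ ω, (Z ω).re ∂μ : ℝ) : ℂ) + (∫ ω, (Z ω).im ∂μ : ℝ) * Complex.I := by
  have h := integral_re_add_im hZ
  simp only [RCLike.re_to_complex, RCLike.im_to_complex, RCLike.I_to_complex] at h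
  exact h.symm

/-- Complex version of `IndepFun.integral_mul_of_integrable`. -/
lemma indepFun_integral_mul_complex {Ω : Type*} [MeasurableSpace Ω] {μ : Measure Ω}
    {X Y : Ω → ℂ} (hXY : IndepFun X Y μ) (hX : Integrable X μ) (hY : Integrable Y μ) :
    ∫ ω, X ω * Y ω ∂μ = (∫ ω, X ω ∂μ) * ∫ ω, Y ω ∂μ := by
  have hXre : Integrable (fun ω => (X ω).re) μ := hX.re
  have hXim : Integrable (fun ω => (X ω).im) μ := hX.im
  have hYre : Integrable (fun ω => (Y ω).re) μ := hY.re
  have hYim : Integrable (fun ω => (Y ω).im) μ := hY.im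
  have hrr : IndepFun (fun ω => (X ω).re) (fun ω => (Y ω).re) μ :=
    hXY.comp Complex.measurable_re Complex.measurable_re
  have hri : IndepFun (fun ω => (X ω).re) (fun ω => (Y ω).im) μ :=
    hXY.comp Complex.measurable_re Complex.measurable_im
  have hir : IndepFun (fun ω => (X ω).im) (fun ω => (Y ω).re) μ :=
    hXY.comp Complex.measurable_im Complex.measurable_re
  have hii : IndepFun (fun ω => (X ω).im) (fun ω => (Y ω).im) μ :=
    hXY.comp Complex.measurable_im Complex.measurable_im
  have irr : Integrable (fun ω => (X ω).re * (Y ω).re) μ := hrr.integrable_mul hXre hYre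
  have iri : Integrable (fun ω => (X ω).re * (Y ω).im) μ := hri.integrable_mul hXre hYim
  have iir : Integrable (fun ω => (X ω).im * (Y ω).re) μ := hir.integrable_mul hXim hYre
  have iii : Integrable (fun ω => (X ω).im * (Y ω).im) μ := hii.integrable_mul hXim hYim
  have erR : ∫ ω, (X ω).re * (Y ω).re ∂μ = (∫ ω, (X ω).re ∂μ) * ∫ ω, (Y ω).re ∂μ :=
    hrr.integral_fun_mul_eq_mul_integral hXre.aestronglyMeasurable hYre.aestronglyMeasurable
  have erI : ∫ ω, (X ω).re * (Y ω).im ∂μ = (∫ ω, (X ω).re ∂μ) * ∫ ω, (Y ω).im ∂μ :=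
    hri.integral_fun_mul_eq_mul_integral hXre.aestronglyMeasurable hYim.aestronglyMeasurable
  have eiR : ∫ ω, (X ω).im * (Y ω).re ∂μ = (∫ ω, (X ω).im ∂μ) * ∫ ω, (Y ω).re ∂μ :=
    hir.integral_fun_mul_eq_mul_integral hXim.aestronglyMeasurable hYre.aestronglyMeasurable
  have eiI : ∫ ω, (X ω).im * (Y ω).im ∂μ = (∫ ω, (X ω).im ∂μ) * ∫ ω, (Y ω).im ∂μ :=
    hii.integral_fun_mul_eq_mul_integral hXim.aestronglyMeasurable hYim.aestronglyMeasurable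
  have hW : Integrable (fun ω => X ω * Y ω) μ := by
    have h : (fun ω => X ω * Y ω) = fun ω =>
        (((X ω).re * (Y ω).re - (X ω).im * (Y ω).im : ℝ) : ℂ)
          + ((X ω).re * (Y ω).im + (X ω).im * (Y ω).re : ℝ) • Complex.I := by
      funext ω
      apply Complex.ext <;> simp [Complex.real_smul]
    rw [h]
    exact (Integrable.ofReal (irr.sub iii)).add ((iri.add iir).smul_const Complex.I)
  rw [integral_complex_decomp hW, integral_complex_decomp hX, integral_complex_decomp hY]
  have hre : (fun ω => (X ω * Y ω).re) = fun ω => (X ω).re * (Y ω).re - (X ω).im * (Y ω).im :=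
    funext fun ω => by simp [Complex.mul_re]
  have him : (fun ω => (X ω * Y ω).im) = fun ω => (X ω).re * (Y ω).im + (X ω).im * (Y ω).re :=
    funext fun ω => by simp [Complex.mul_im]
  rw [hre, him, integral_sub irr iii, integral_add iri iir, erR, erI, eiR, eiI]
  push_cast
  ring_nf
  rw [Complex.I_sq]
  ring

lemma integrable_of_bounded_one {Ω : Type*} [MeasurableSpace Ω] {μ : Measure Ω}
    [IsProbabilityMeasure μ] {X : Ω → ℂ} (hm : AEStronglyMeasurable X μ)
    (hb : ∀ ω, ‖X ω‖ ≤ 1) : Integrable X μ :=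
  Integrable.mono' (integrable_const 1) hm (Filter.Eventually.of_forall hb)

lemma iIndepFun_integral_finset_prod_complex {ι Ω : Type*} [MeasurableSpace Ω]
    {μ : Measure Ω} [IsProbabilityMeasure μ] {X : ι → Ω → ℂ}
    (hX : iIndepFun X μ) (hm : ∀ i, Measurable (X i))
    (hb : ∀ i ω, ‖X i ω‖ ≤ 1) (s : Finset ι) :
    ∫ ω, ∏ i ∈ s, X i ω ∂μ = ∏ i ∈ s, ∫ ω, X i ω ∂μ := by
  classical
  induction s using Finset.induction_on with
  | empty => simp
  | @insert a s ha ih =>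
    simp only [Finset.prod_insert ha]
    have hint : ∀ i, Integrable (X i) μ := fun i =>
      integrable_of_bounded_one (hm i).aestronglyMeasurable (hb i)
    have hprodb : ∀ ω, ‖∏ i ∈ s, X i ω‖ ≤ 1 := by
      intro ω
      calc ‖∏ i ∈ s, X i ω‖ = ∏ i ∈ s, ‖X i ω‖ := by rw [norm_prod]
        _ ≤ ∏ i ∈ s, 1 := Finset.prod_le_prod (fun i _ => norm_nonneg _)
            (fun i _ => hb i ω)
        _ = 1 := Finset.prod_const_one
    have hprodm : Measurable (fun ω => ∏ i ∈ s, X i ω) :=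
      Finset.measurable_prod s fun i _ => hm i
    have hindep : IndepFun (X a) (fun ω => ∏ i ∈ s, X i ω) μ := by
      have h := hX.indepFun_finsetProd_of_notMem hm ha
      have : (∏ j ∈ s, X j) = fun ω => ∏ i ∈ s, X i ω := by
        funext ω; simp [Finset.prod_apply]
      rw [this] at h
      exact h.symm
    rw [show (∫ ω, X a ω * ∏ i ∈ s, X i ω ∂μ) = (∫ ω, X a ω ∂μ) * ∫ ω, ∏ i ∈ s, X i ω ∂μ from
      indepFun_integral_mul_complex hindep (hint a)
        (integrable_of_bounded_one hprodm.aestronglyMeasurable hprodb), ih]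

section RMF
variable {Ω : Type*} [MeasurableSpace Ω] {μ : Measure Ω} {f : Ω → ℕ → ℂ}
  (hf : IsSteinhausRMF μ f)

include hf

lemma IsSteinhausRMF.map_prod {ι : Type*} (ω : Ω) (s : Finset ι) (v : ι → ℕ)
    (hv : ∀ i ∈ s, 0 < v i) : f ω (∏ i ∈ s, v i) = ∏ i ∈ s, f ω (v i) := by
  classical
  induction s using Finset.induction_on with
  | empty => simpa using hf.map_one ω
  | @insert a s ha ih =>
    rw [Finset.prod_insert ha, Finset.prod_insert ha,
      hf.map_mul ω _ _ (hv a (Finset.mem_insert_self a s))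
        (Finset.prod_pos fun i hi => hv i (Finset.mem_insert_of_mem hi)),
      ih fun i hi => hv i (Finset.mem_insert_of_mem hi)]

lemma IsSteinhausRMF.map_pow (ω : Ω) (p k : ℕ) (hp : 0 < p) :
    f ω (p ^ k) = f ω p ^ k := by
  induction k with
  | zero => simpa using hf.map_one ω
  | succ k ih =>
    rw [pow_succ, pow_succ, hf.map_mul ω _ _ (Nat.pow_pos hp) hp, ih]

lemma IsSteinhausRMF.map_factorization (ω : Ω) (n : ℕ) (hn : 0 < n) :
    f ω n = ∏ p ∈ n.primeFactors, f ω p ^ n.factorization p := by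
  have h : (∏ p ∈ n.primeFactors, p ^ n.factorization p) = n := by
    rw [← Nat.support_factorization]
    exact Nat.factorization_prod_pow_eq_self hn.ne'
  conv_lhs => rw [← h]
  rw [hf.map_prod ω _ _ (fun p hp => pow_pos
    (Nat.prime_of_mem_primeFactors hp).pos _)]
  exact Finset.prod_congr rfl fun p hp =>
    hf.map_pow ω p _ (Nat.prime_of_mem_primeFactors hp).pos

lemma IsSteinhausRMF.norm_eq_one (ω : Ω) (n : ℕ) (hn : 0 < n) : ‖f ω n‖ = 1 := by
  rw [hf.map_factorization ω n hn, norm_prod]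
  rw [Finset.prod_eq_one]
  intro p hp
  rw [norm_pow, hf.norm_prime ω p (Nat.prime_of_mem_primeFactors hp), one_pow]

lemma prod_pow_factorization_extend (m : ℕ) (hm : 0 < m) (Q : Finset ℕ)
    (hsub : m.primeFactors ⊆ Q) : ∏ p ∈ Q, p ^ m.factorization p = m := by
  rw [← Finset.prod_subset hsub (fun p _ hpn => by
    rw [show m.factorization p = 0 from by
      rwa [← Nat.support_factorization, Finsupp.notMem_support_iff] at hpn, pow_zero])]
  rw [← Nat.support_factorization]
  exact Nat.factorization_prod_pow_eq_self hm.ne'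

lemma IsSteinhausRMF.orthogonality [IsProbabilityMeasure μ] (m n : ℕ)
    (hm : 0 < m) (hn : 0 < n) :
    ∫ ω, f ω m * (starRingEnd ℂ) (f ω n) ∂μ = if m = n then 1 else 0 := by
  classical
  set Q : Finset ℕ := m.primeFactors ∪ n.primeFactors with hQ
  have hQprime : ∀ p ∈ Q, p.Prime := fun p hp => by
    rcases Finset.mem_union.1 hp with h | h <;> exact Nat.prime_of_mem_primeFactors h
  have hfm : ∀ ω, f ω m = ∏ p ∈ Q, f ω p ^ m.factorization p := by
    intro ω
    rw [hf.map_factorization ω m hm]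
    apply Finset.prod_subset Finset.subset_union_left
    intro p hp hpn
    rw [show m.factorization p = 0 from by
      rwa [← Nat.support_factorization, Finsupp.notMem_support_iff] at hpn, pow_zero]
  have hfn : ∀ ω, f ω n = ∏ p ∈ Q, f ω p ^ n.factorization p := by
    intro ω
    rw [hf.map_factorization ω n hn]
    apply Finset.prod_subset Finset.subset_union_right
    intro p hp hpn
    rw [show n.factorization p = 0 from by
      rwa [← Nat.support_factorization, Finsupp.notMem_support_iff] at hpn, pow_zero]
  set Q' : Finset {q : ℕ // q.Prime} := Q.subtype Nat.Prime with hQ'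
  set g : {q : ℕ // q.Prime} → ℂ → ℂ := fun p z =>
    z ^ m.factorization p.1 * (starRingEnd ℂ z) ^ n.factorization p.1 with hg
  have hgm : ∀ p, Measurable (g p) := fun p =>
    (measurable_id.pow_const _).mul (Complex.continuous_conj.measurable.pow_const _)
  set X : {q : ℕ // q.Prime} → Ω → ℂ := fun p ω => g p (f ω p.1) with hX
  have hsubp : ∀ (h : ℕ → ℂ), ∏ p ∈ Q', h p.1 = ∏ p ∈ Q, h p := by
    intro h
    rw [hQ', Finset.prod_subtype_eq_prod_filter, Finset.filter_true_of_mem hQprime]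
  have key : ∀ ω, f ω m * (starRingEnd ℂ) (f ω n) = ∏ p ∈ Q', X p ω := by
    intro ω
    rw [hsubp fun p => f ω p ^ m.factorization p * (starRingEnd ℂ) (f ω p) ^ n.factorization p]
    rw [hfm ω, hfn ω, _root_.map_prod (starRingEnd ℂ) (fun p => f ω p ^ n.factorization p) Q, ← Finset.prod_mul_distrib]
    exact Finset.prod_congr rfl fun p _ => by rw [_root_.map_pow]
  have hXindep : iIndepFun X μ :=
    hf.indep.comp g hgm
  have hXm : ∀ p, Measurable (X p) := fun p => (hgm p).comp (hf.meas p.1)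
  have hXb : ∀ p ω, ‖X p ω‖ ≤ 1 := by
    intro p ω
    rw [hX, hg]
    simp only [norm_mul, norm_pow, RCLike.norm_conj]
    rw [hf.norm_prime ω p.1 p.2]
    simp
  have hXi : ∀ p ∈ Q', ∫ ω, X p ω ∂μ =
      if m.factorization p.1 = n.factorization p.1 then 1 else 0 := by
    intro p _
    have h1 : ∫ ω, X p ω ∂μ = ∫ z, g p z ∂(Measure.map (fun ω => f ω p.1) μ) :=
      (integral_map (hf.meas p.1).aemeasurable
        ((hgm p).aestronglyMeasurable)).symm
    rw [h1, hf.unif p.1 p.2, hg]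
    exact steinhaus_moment _ _
  rw [integral_congr_ae (Filter.Eventually.of_forall key),
    iIndepFun_integral_finset_prod_complex hXindep hXm hXb Q',
    Finset.prod_congr rfl hXi]
  by_cases hmn : m = n
  · subst hmn
    simp
  · have hne : ∃ p ∈ Q, m.factorization p ≠ n.factorization p := by
      by_contra hc
      push_neg at hc
      apply hmn
      rw [← prod_pow_factorization_extend hf m hm Q Finset.subset_union_left,
        ← prod_pow_factorization_extend hf n hn Q Finset.subset_union_right]
      exact Finset.prod_congr rfl fun p hp => by rw [hc p hp]
    obtain ⟨p, hpQ, hpne⟩ := hne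
    rw [if_neg hmn]
    apply Finset.prod_eq_zero (i := (⟨p, hQprime p hpQ⟩ : {q : ℕ // q.Prime}))
    · rw [hQ', Finset.mem_subtype]
      exact hpQ
    · simp [hpne]

end RMF

lemma tauk_one (l : ℕ) : tauk l 1 = 1 := by
  rw [tauk, show ((Fintype.piFinset fun _ : Fin l => Finset.Icc 1 1).filter
      fun v => ∏ i, v i = 1) = {fun _ => 1} from ?_, Finset.card_singleton]
  ext v
  simp only [Finset.mem_filter, Fintype.mem_piFinset, Finset.mem_Icc, Finset.mem_singleton,
    funext_iff]
  constructor
  · exact fun h i => le_antisymm (h.1 i).2 (h.1 i).1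
  · intro h
    refine ⟨fun i => by simp [h i], Finset.prod_eq_one fun i _ => h i⟩

/-- Any family of tuples with positive entries and product `n` has cardinality
at most `tauk l n`. -/
lemma card_filter_prod_le (l n : ℕ) (T : Finset ℕ) (hT : ∀ x ∈ T, 0 < x) :
    ((Fintype.piFinset fun _ : Fin l => T).filter fun v => ∏ i, v i = n).card ≤ tauk l n := by
  apply Finset.card_le_card
  intro v hv
  rw [Finset.mem_filter, Fintype.mem_piFinset] at hv ⊢
  refine ⟨fun i => ?_, hv.2⟩
  have hpos : ∀ j, 0 < v j := fun j => hT _ (hv.1 j)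
  have hdvd : v i ∣ n := hv.2 ▸ Finset.dvd_prod_of_mem v (Finset.mem_univ i)
  have hn : 0 < n := hv.2 ▸ Finset.prod_pos fun j _ => hpos j
  exact Finset.mem_Icc.2 ⟨hpos i, Nat.le_of_dvd hn hdvd⟩

/-- The gcd chain: `mchain m v k` is what remains of `m` after extracting gcds with
`v 0, …, v (k-1)`. -/
def mchain (m : ℕ) (v : ℕ → ℕ) : ℕ → ℕ
  | 0 => m
  | k + 1 => mchain m v k / Nat.gcd (v k) (mchain m v k)

def uchain (m : ℕ) (v : ℕ → ℕ) (k : ℕ) : ℕ := Nat.gcd (v k) (mchain m v k)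

lemma uchain_mul_mchain (m : ℕ) (v : ℕ → ℕ) (k : ℕ) :
    uchain m v k * mchain m v (k + 1) = mchain m v k :=
  Nat.mul_div_cancel' (Nat.gcd_dvd_right _ _)

lemma mchain_dvd (m : ℕ) (v : ℕ → ℕ) (k : ℕ) : mchain m v k ∣ m := by
  induction k with
  | zero => exact dvd_rfl
  | succ k ih => exact dvd_trans (Nat.div_dvd_of_dvd (Nat.gcd_dvd_right _ _)) ih

lemma prod_uchain_mul_mchain (m : ℕ) (v : ℕ → ℕ) (K : ℕ) :
    (∏ k ∈ Finset.range K, uchain m v k) * mchain m v K = m := by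
  induction K with
  | zero => simp [mchain]
  | succ K ih =>
    rw [Finset.prod_range_succ, mul_assoc, uchain_mul_mchain, ih]

lemma div_gcd_dvd_of_dvd_mul {d a b : ℕ} (ha : 0 < a) (h : d ∣ a * b) :
    d / Nat.gcd d a ∣ b := by
  set g := Nat.gcd d a with hg
  have hgpos : 0 < g := Nat.gcd_pos_of_pos_right d ha
  have hgd : g ∣ d := Nat.gcd_dvd_left d a
  have hga : g ∣ a := Nat.gcd_dvd_right d a
  obtain ⟨c, hc⟩ := h
  have hdg : d / g ∣ b * (a / g) := by
    refine ⟨c, ?_⟩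
    apply Nat.eq_of_mul_eq_mul_left hgpos
    calc g * (b * (a / g)) = a / g * g * b := by ring
      _ = a * b := by rw [Nat.div_mul_cancel hga]
      _ = d * c := hc
      _ = d / g * g * c := by rw [Nat.div_mul_cancel hgd]
      _ = g * (d / g * c) := by ring
  exact (Nat.coprime_div_gcd_div_gcd hgpos).dvd_of_dvd_mul_right hdg

lemma mchain_dvd_prod (m : ℕ) (v : ℕ → ℕ) (hv : ∀ k, 0 < v k) (K : ℕ)
    (hm : m ∣ ∏ j ∈ Finset.range K, v j) :
    ∀ k, k ≤ K → mchain m v k ∣ ∏ j ∈ Finset.Ico k K, v j := by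
  intro k
  induction k with
  | zero => intro _; simpa [mchain] using hm
  | succ k ih =>
    intro hk
    have hk' : k ≤ K := Nat.le_of_succ_le hk
    have h1 := ih hk'
    rw [Finset.prod_eq_prod_Ico_succ_bot (Nat.lt_of_succ_le hk)] at h1
    have h2 : mchain m v (k + 1) = mchain m v k / Nat.gcd (mchain m v k) (v k) := by
      rw [mchain, Nat.gcd_comm]
    rw [h2]
    exact div_gcd_dvd_of_dvd_mul (hv k) h1

lemma tauk_mul_le (l m n : ℕ) (hm : 0 < m) (hn : 0 < n) :
    tauk l (m * n) ≤ tauk l m * tauk l n := by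
  classical
  rw [tauk, tauk, tauk, ← Finset.card_product]
  set A := (Fintype.piFinset fun _ : Fin l => Finset.Icc 1 (m * n)).filter
    fun v => ∏ i, v i = m * n with hA
  set B := ((Fintype.piFinset fun _ : Fin l => Finset.Icc 1 m).filter
      fun v => ∏ i, v i = m) ×ˢ
    ((Fintype.piFinset fun _ : Fin l => Finset.Icc 1 n).filter
      fun v => ∏ i, v i = n) with hB
  -- the decomposition map
  set ext : (Fin l → ℕ) → ℕ → ℕ := fun v k => if h : k < l then v ⟨k, h⟩ else 1 with hext
  set Φ : (Fin l → ℕ) → (Fin l → ℕ) × (Fin l → ℕ) := fun v =>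
    (fun i => uchain m (ext v) i.1, fun i => v i / uchain m (ext v) i.1) with hΦ
  apply Finset.card_le_card_of_injOn Φ
  · -- maps into B
    intro v hv
    rw [hA, Finset.mem_coe, Finset.mem_filter, Fintype.mem_piFinset] at hv
    obtain ⟨hmem, hprod⟩ := hv
    have hvpos : ∀ i, 0 < v i := fun i => (Finset.mem_Icc.1 (hmem i)).1
    have hextpos : ∀ k, 0 < ext v k := by
      intro k; rw [hext]; dsimp only
      split <;> simp [hvpos]
    have hproderange : ∏ j ∈ Finset.range l, ext v j = m * n := by
      rw [← hprod, ← Fin.prod_univ_eq_prod_range]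
      exact Finset.prod_congr rfl fun i _ => by simp [hext]
    have hMl : mchain m (ext v) l = 1 := by
      have h1 := mchain_dvd_prod m (ext v) hextpos l
        (by rw [hproderange]; exact Dvd.intro n rfl) l le_rfl
      simp only [Finset.Ico_self, Finset.prod_empty] at h1
      exact Nat.dvd_one.1 h1
    have hprodu : ∏ i : Fin l, uchain m (ext v) i.1 = m := by
      rw [Fin.prod_univ_eq_prod_range (fun k => uchain m (ext v) k) l]
      have := prod_uchain_mul_mchain m (ext v) l
      rwa [hMl, mul_one] at this
    have hudvd : ∀ i : Fin l, uchain m (ext v) i.1 ∣ v i := by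
      intro i
      have : uchain m (ext v) i.1 ∣ ext v i.1 := Nat.gcd_dvd_left _ _
      rwa [show ext v i.1 = v i from by simp [hext]] at this
    have hupos : ∀ i : Fin l, 0 < uchain m (ext v) i.1 := fun i =>
      Nat.pos_of_dvd_of_pos (hudvd i) (hvpos i)
    have hveq : ∀ i : Fin l, uchain m (ext v) i.1 * (v i / uchain m (ext v) i.1) = v i :=
      fun i => Nat.mul_div_cancel' (hudvd i)
    have hprodw : ∏ i : Fin l, (v i / uchain m (ext v) i.1) = n := by
      have h3 : m * ∏ i : Fin l, (v i / uchain m (ext v) i.1) = m * n := by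
        calc m * ∏ i : Fin l, (v i / uchain m (ext v) i.1)
            = (∏ i : Fin l, uchain m (ext v) i.1)
              * ∏ i : Fin l, (v i / uchain m (ext v) i.1) := by rw [hprodu]
          _ = ∏ i : Fin l, uchain m (ext v) i.1 * (v i / uchain m (ext v) i.1) :=
              Finset.prod_mul_distrib.symm
          _ = ∏ i : Fin l, v i := Finset.prod_congr rfl fun i _ => hveq i
          _ = m * n := hprod
      exact Nat.eq_of_mul_eq_mul_left hm h3
    rw [hB, Finset.mem_coe, Finset.mem_product]
    constructor
    · rw [Finset.mem_filter, Fintype.mem_piFinset]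
      refine ⟨fun i => Finset.mem_Icc.2 ⟨hupos i, Nat.le_of_dvd hm ?_⟩, hprodu⟩
      exact dvd_trans (Nat.gcd_dvd_right _ _) (mchain_dvd m (ext v) i.1)
    · rw [Finset.mem_filter, Fintype.mem_piFinset]
      refine ⟨fun i => Finset.mem_Icc.2 ⟨?_, Nat.le_of_dvd hn ?_⟩, hprodw⟩
      · exact Nat.div_pos (Nat.le_of_dvd (hvpos i) (hudvd i)) (hupos i)
      · exact hprodw ▸ Finset.dvd_prod_of_mem _ (Finset.mem_univ i)
  · -- injective
    intro v1 hv1 v2 hv2 heq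
    have h1 : ∀ i : Fin l, uchain m (ext v1) i.1 ∣ v1 i := by
      intro i
      have : uchain m (ext v1) i.1 ∣ ext v1 i.1 := Nat.gcd_dvd_left _ _
      rwa [show ext v1 i.1 = v1 i from by simp [hext]] at this
    have h2 : ∀ i : Fin l, uchain m (ext v2) i.1 ∣ v2 i := by
      intro i
      have : uchain m (ext v2) i.1 ∣ ext v2 i.1 := Nat.gcd_dvd_left _ _
      rwa [show ext v2 i.1 = v2 i from by simp [hext]] at this
    funext i
    have e1 := congrFun (congrArg Prod.fst heq) i
    have e2 := congrFun (congrArg Prod.snd heq) i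
    simp only [hΦ] at e1 e2
    calc v1 i = uchain m (ext v1) i.1 * (v1 i / uchain m (ext v1) i.1) :=
        (Nat.mul_div_cancel' (h1 i)).symm
      _ = uchain m (ext v2) i.1 * (v2 i / uchain m (ext v2) i.1) := by rw [e2, e1]
      _ = v2 i := Nat.mul_div_cancel' (h2 i)

lemma tauk_prod_le {ι : Type*} (l : ℕ) (s : Finset ι) (g : ι → ℕ) (hg : ∀ i ∈ s, 0 < g i) :
    tauk l (∏ i ∈ s, g i) ≤ ∏ i ∈ s, tauk l (g i) := by
  classical
  induction s using Finset.induction_on with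
  | empty => simp [tauk_one]
  | @insert a s ha ih =>
    rw [Finset.prod_insert ha, Finset.prod_insert ha]
    calc tauk l (g a * ∏ i ∈ s, g i)
        ≤ tauk l (g a) * tauk l (∏ i ∈ s, g i) :=
          tauk_mul_le l _ _ (hg a (Finset.mem_insert_self a s))
            (Finset.prod_pos fun i hi => hg i (Finset.mem_insert_of_mem hi))
      _ ≤ tauk l (g a) * ∏ i ∈ s, tauk l (g i) :=
          Nat.mul_le_mul_left _ (ih fun i hi => hg i (Finset.mem_insert_of_mem hi))

set_option maxHeartbeats 2000000 in
/-- **Lemma 1.** If `(a(n))_{n ≥ 1}` has finitely many nonzero terms and `l ≥ 1`, then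
`E|∑_{n≥1} a(n) f(n)/√n|^{2l} ≤ (∑_{n≥1} |a(n)|² τ_l(n)/n)^l`. -/
theorem steinhaus_moment_bound {Ω : Type*} [MeasurableSpace Ω]
    (μ : Measure Ω) [IsProbabilityMeasure μ] (f : Ω → ℕ → ℂ)
    (hf : IsSteinhausRMF μ f) (a : ℕ → ℂ) (ha : (Function.support a).Finite)
    (ha0 : a 0 = 0) (l : ℕ) (hl : 0 < l) :
    ∫ ω, ‖∑' n : ℕ, a n * f ω n / (Real.sqrt n : ℂ)‖ ^ (2 * l) ∂μ ≤
      (∑' n : ℕ, ‖a n‖ ^ 2 * (tauk l n : ℝ) / n) ^ l := by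
  classical
  set T : Finset ℕ := ha.toFinset with hTdef
  have hmemT : ∀ b, b ∉ T → a b = 0 := by
    intro b hb
    by_contra h
    exact hb (ha.mem_toFinset.2 h)
  have hT0 : ∀ x ∈ T, 0 < x := by
    intro x hx
    rcases Nat.eq_zero_or_pos x with rfl | h
    · exact absurd ha0 (by simpa using ha.mem_toFinset.1 hx)
    · exact h
  set c : ℕ → ℂ := fun n => a n / (Real.sqrt n : ℂ) with hc
  set S : Ω → ℂ := fun ω => ∑ n ∈ T, c n * f ω n with hS
  have hLHSpt : ∀ ω, (∑' n : ℕ, a n * f ω n / (Real.sqrt n : ℂ)) = S ω := by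
    intro ω
    rw [tsum_eq_sum (s := T) (fun b hb => by simp [hmemT b hb])]
    exact Finset.sum_congr rfl fun n _ => by rw [hc]; ring
  have hRHS : (∑' n : ℕ, ‖a n‖ ^ 2 * (tauk l n : ℝ) / n)
      = ∑ n ∈ T, ‖a n‖ ^ 2 * (tauk l n : ℝ) / n :=
    tsum_eq_sum fun b hb => by simp [hmemT b hb]
  simp_rw [hLHSpt, hRHS]
  set Pi' : Finset (Fin l → ℕ) := Fintype.piFinset fun _ => T with hPi'
  set P : (Fin l → ℕ) → ℕ := fun v => ∏ i, v i with hP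
  set C : (Fin l → ℕ) → ℂ := fun v => ∏ i, c (v i) with hC
  have hPpos : ∀ v ∈ Pi', 0 < P v := fun v hv =>
    Finset.prod_pos fun i _ => hT0 _ (Fintype.mem_piFinset.1 hv i)
  have hSpow : ∀ ω, S ω ^ l = ∑ v ∈ Pi', C v * f ω (P v) := by
    intro ω
    have h1 : S ω ^ l = ∏ _i : Fin l, S ω := by
      rw [Finset.prod_const, Finset.card_univ, Fintype.card_fin]
    rw [h1, hS]
    dsimp only
    rw [Finset.prod_univ_sum]
    apply Finset.sum_congr rfl
    intro v hv
    rw [Finset.prod_mul_distrib, hC, hP]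
    dsimp only
    rw [← hf.map_prod ω Finset.univ v (fun i _ => hT0 _ (Fintype.mem_piFinset.1 hv i))]
  have hmeasS : Measurable S :=
    Finset.measurable_sum T fun n _ => measurable_const.mul (hf.meas n)
  have hexp : ∀ ω, S ω ^ l * (starRingEnd ℂ) (S ω ^ l) =
      ∑ v ∈ Pi', ∑ w ∈ Pi', (C v * (starRingEnd ℂ) (C w))
        * (f ω (P v) * (starRingEnd ℂ) (f ω (P w))) := by
    intro ω
    rw [hSpow, map_sum, Finset.sum_mul_sum]
    apply Finset.sum_congr rfl
    intro v _
    apply Finset.sum_congr rfl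
    intro w _
    rw [map_mul]
    ring
  have hterm_int : ∀ v ∈ Pi', ∀ w ∈ Pi',
      Integrable (fun ω => (C v * (starRingEnd ℂ) (C w))
        * (f ω (P v) * (starRingEnd ℂ) (f ω (P w)))) μ := by
    intro v hv w hw
    apply Integrable.const_mul
    apply integrable_of_bounded_one
    · exact ((hf.meas (P v)).mul
        (Complex.continuous_conj.measurable.comp (hf.meas (P w)))).aestronglyMeasurable
    · intro ω
      rw [norm_mul, RCLike.norm_conj, hf.norm_eq_one ω _ (hPpos v hv),
        hf.norm_eq_one ω _ (hPpos w hw), mul_one]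
  have hterm_val : ∀ v ∈ Pi', ∀ w ∈ Pi',
      (∫ ω, (C v * (starRingEnd ℂ) (C w))
        * (f ω (P v) * (starRingEnd ℂ) (f ω (P w))) ∂μ)
      = if P v = P w then C v * (starRingEnd ℂ) (C w) else 0 := by
    intro v hv w hw
    rw [integral_const_mul, hf.orthogonality (P v) (P w) (hPpos v hv) (hPpos w hw)]
    split <;> simp
  have hintW : (∫ ω, S ω ^ l * (starRingEnd ℂ) (S ω ^ l) ∂μ)
      = ∑ v ∈ Pi', ∑ w ∈ Pi',
          (if P v = P w then C v * (starRingEnd ℂ) (C w) else 0) := by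
    rw [integral_congr_ae (Filter.Eventually.of_forall hexp)]
    rw [integral_finset_sum _ (fun v hv => integrable_finset_sum _ (fun w hw =>
      hterm_int v hv w hw))]
    apply Finset.sum_congr rfl
    intro v hv
    rw [integral_finset_sum _ (fun w hw => hterm_int v hv w hw)]
    exact Finset.sum_congr rfl fun w hw => hterm_val v hv w hw
  have hnorm : ∀ ω, ‖S ω‖ ^ (2 * l) = (S ω ^ l * (starRingEnd ℂ) (S ω ^ l)).re := by
    intro ω
    rw [Complex.mul_conj, Complex.ofReal_re, Complex.normSq_eq_norm_sq,
      norm_pow, ← pow_mul, mul_comm l 2]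
  have hWint : Integrable (fun ω => S ω ^ l * (starRingEnd ℂ) (S ω ^ l)) μ := by
    set B : ℝ := ∑ n ∈ T, ‖c n‖ with hB
    have hSB : ∀ ω, ‖S ω‖ ≤ B := by
      intro ω
      rw [hS]
      refine le_trans (norm_sum_le _ _) (Finset.sum_le_sum fun n hn => ?_)
      rw [norm_mul, hf.norm_eq_one ω n (hT0 n hn), mul_one]
    refine Integrable.mono' (integrable_const (B ^ l * B ^ l))
      (((hmeasS.pow_const l).mul
        (Complex.continuous_conj.measurable.comp (hmeasS.pow_const l))).aestronglyMeasurable)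
      (Filter.Eventually.of_forall fun ω => ?_)
    calc ‖S ω ^ l * (starRingEnd ℂ) (S ω ^ l)‖ = ‖S ω‖ ^ l * ‖S ω‖ ^ l := by
          rw [norm_mul, RCLike.norm_conj, norm_pow]
      _ ≤ B ^ l * B ^ l := by
          have h0 : (0:ℝ) ≤ ‖S ω‖ := norm_nonneg _
          have h1 : ‖S ω‖ ^ l ≤ B ^ l := pow_le_pow_left₀ h0 (hSB ω) l
          exact mul_le_mul h1 h1 (pow_nonneg h0 l) (pow_nonneg (h0.trans (hSB ω)) l)
  have hre : (∫ ω, ‖S ω‖ ^ (2 * l) ∂μ)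
      = (∫ ω, S ω ^ l * (starRingEnd ℂ) (S ω ^ l) ∂μ).re := by
    rw [integral_congr_ae (Filter.Eventually.of_forall hnorm)]
    have h := integral_re (𝕜 := ℂ) hWint
    simp only [RCLike.re_to_complex] at h
    exact h
  rw [hre, hintW, Complex.re_sum]
  have hresum : ∀ v ∈ Pi',
      (∑ w ∈ Pi', if P v = P w then C v * (starRingEnd ℂ) (C w) else 0).re
      = ∑ w ∈ Pi', (if P v = P w then (C v * (starRingEnd ℂ) (C w)).re else 0) := by
    intro v _
    rw [Complex.re_sum]
    exact Finset.sum_congr rfl fun w _ => by rw [apply_ite Complex.re, Complex.zero_re]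
  rw [Finset.sum_congr rfl hresum]
  -- now a chain of real inequalities
  set x : (Fin l → ℕ) → ℝ := fun v => ‖C v‖ ^ 2 with hx
  have step1 : ∑ v ∈ Pi', ∑ w ∈ Pi', (if P v = P w then (C v * (starRingEnd ℂ) (C w)).re else 0)
      ≤ ∑ v ∈ Pi', ∑ w ∈ Pi', (if P v = P w then (x v + x w) / 2 else 0) := by
    refine Finset.sum_le_sum fun v _ => Finset.sum_le_sum fun w _ => ?_
    split
    · calc (C v * (starRingEnd ℂ) (C w)).re ≤ ‖C v * (starRingEnd ℂ) (C w)‖ :=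
          Complex.re_le_norm _
        _ = ‖C v‖ * ‖C w‖ := by rw [norm_mul, RCLike.norm_conj]
        _ ≤ (x v + x w) / 2 := by
          rw [hx]; dsimp only; nlinarith [sq_nonneg (‖C v‖ - ‖C w‖)]
    · exact le_rfl
  have step2 : ∑ v ∈ Pi', ∑ w ∈ Pi', (if P v = P w then (x v + x w) / 2 else 0)
      = ∑ v ∈ Pi', ∑ w ∈ Pi', (if P v = P w then x v else 0) := by
    have h1 : ∀ v w : Fin l → ℕ, (if P v = P w then (x v + x w) / 2 else 0)
        = ((if P v = P w then x v else 0) + (if P v = P w then x w else 0)) / 2 := by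
      intro v w; split <;> ring
    have h2 : ∑ v ∈ Pi', ∑ w ∈ Pi', (if P v = P w then x w else 0)
        = ∑ v ∈ Pi', ∑ w ∈ Pi', (if P v = P w then x v else 0) := by
      rw [Finset.sum_comm]
      refine Finset.sum_congr rfl fun v _ => Finset.sum_congr rfl fun w _ => ?_
      simp only [eq_comm]
    simp_rw [h1]
    simp only [← Finset.sum_div, Finset.sum_add_distrib]
    rw [h2]
    ring
  have hxnn : ∀ v, 0 ≤ x v := fun v => sq_nonneg _
  have step3 : ∀ v ∈ Pi', ∑ w ∈ Pi', (if P v = P w then x v else 0)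
      ≤ x v * (tauk l (P v) : ℝ) := by
    intro v hv
    have he : ∑ w ∈ Pi', (if P v = P w then x v else 0)
        = ((Pi'.filter fun w => P v = P w).card : ℝ) * x v := by
      rw [← Finset.sum_filter, Finset.sum_const, nsmul_eq_mul]
    rw [he, mul_comm]
    apply mul_le_mul_of_nonneg_left _ (hxnn v)
    have heq : (Pi'.filter fun w => P v = P w) = Pi'.filter fun w => ∏ i, w i = P v :=
      Finset.filter_congr fun w _ => by rw [hP]; exact ⟨fun h => h.symm, fun h => h.symm⟩
    exact_mod_cast Nat.cast_le.2 (heq ▸ card_filter_prod_le l (P v) T hT0)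
  have hcn : ∀ n : ℕ, 0 < n → ‖c n‖ ^ 2 = ‖a n‖ ^ 2 / n := by
    intro n hn
    rw [hc]
    dsimp only
    rw [norm_div, div_pow]
    congr 1
    rw [Complex.norm_real, Real.norm_eq_abs, sq_abs, Real.sq_sqrt (by positivity)]
  have step4 : ∀ v ∈ Pi', x v * (tauk l (P v) : ℝ)
      ≤ ∏ i, (‖a (v i)‖ ^ 2 * (tauk l (v i) : ℝ) / (v i)) := by
    intro v hv
    have hvp : ∀ i, 0 < v i := fun i => hT0 _ (Fintype.mem_piFinset.1 hv i)
    have htk : (tauk l (P v) : ℝ) ≤ ∏ i, (tauk l (v i) : ℝ) := by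
      rw [← Nat.cast_prod]
      exact_mod_cast tauk_prod_le l Finset.univ v fun i _ => hvp i
    have hxv : x v = ∏ i, ‖c (v i)‖ ^ 2 := by
      rw [hx, hC]
      dsimp only
      rw [norm_prod, ← Finset.prod_pow]
    calc x v * (tauk l (P v) : ℝ) ≤ x v * ∏ i, (tauk l (v i) : ℝ) :=
        mul_le_mul_of_nonneg_left htk (hxnn v)
      _ = ∏ i, (‖c (v i)‖ ^ 2 * (tauk l (v i) : ℝ)) := by
          rw [hxv, ← Finset.prod_mul_distrib]
      _ = ∏ i, (‖a (v i)‖ ^ 2 * (tauk l (v i) : ℝ) / (v i)) := by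
          refine Finset.prod_congr rfl fun i _ => ?_
          rw [hcn (v i) (hvp i)]
          ring
  have hfinal : (∑ n ∈ T, ‖a n‖ ^ 2 * (tauk l n : ℝ) / n) ^ l
      = ∑ v ∈ Pi', ∏ i, (‖a (v i)‖ ^ 2 * (tauk l (v i) : ℝ) / (v i)) := by
    calc (∑ n ∈ T, ‖a n‖ ^ 2 * (tauk l n : ℝ) / n) ^ l
        = ∏ _i : Fin l, ∑ n ∈ T, ‖a n‖ ^ 2 * (tauk l n : ℝ) / n := by
          rw [Finset.prod_const, Finset.card_univ, Fintype.card_fin]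
      _ = ∑ v ∈ Pi', ∏ i, (‖a (v i)‖ ^ 2 * (tauk l (v i) : ℝ) / (v i)) :=
          Finset.prod_univ_sum _ _
  refine le_trans step1 ?_
  rw [step2, hfinal]
  exact Finset.sum_le_sum fun v hv => le_trans (step3 v hv) (step4 v hv)
end

section
/- For any ε > 0 there exists λ₀ > 1 such that for every λ ≥ λ₀ the following holds: setting T_k = exp(exp(λ^k)) and σ_k = log log T_k / log T_k for integers k ≥ 1, almost surely for all sufficiently large k one has ∑_{p ≤ T_{k−1}} [ 2 Re(f(p)) (log T_k) sin(log p / (2 log T_k)) / (p^{1/2 + σ_k} log p) + Re(f(p)²) / (2 p^{1 + 2σ_k}) ] ≤ ε √(log₂ T_k · log₄ T_k), where the sum runs over primes p ≤ T_{k−1}. -/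
open MeasureTheory ProbabilityTheory Filter

/-- Iterated logarithm: `llog x = log log x`. -/
noncomputable def llog (x : ℝ) : ℝ := Real.log (Real.log x)

/-- Iterated logarithm: `llllog x = log log log log x`. -/
noncomputable def llllog (x : ℝ) : ℝ := Real.log (Real.log (Real.log (Real.log x)))

/-- `Tk λ k = exp(exp(λ^k))`. -/
noncomputable def Tk (l : ℝ) (k : ℕ) : ℝ := Real.exp (Real.exp (l ^ k))

/-- `sigmaT λ k = log log T_k / log T_k` where `T_k = exp(exp(λ^k))`. -/
noncomputable def sigmaT (l : ℝ) (k : ℕ) : ℝ :=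
  Real.log (Real.log (Tk l k)) / Real.log (Tk l k)

/-! ### Auxiliary probabilistic lemmas (Hoeffding / Chernoff) -/

section Prob

variable {Ω : Type*} [MeasurableSpace Ω] {μ : Measure Ω}

lemma my_integrable_of_abs_le [IsFiniteMeasure μ]
    {X : Ω → ℝ} (hX : AEStronglyMeasurable X μ) {C : ℝ} (h : ∀ ω, |X ω| ≤ C) :
    Integrable X μ :=
  (integrable_const C).mono' hX (ae_of_all _ fun ω => by
    simpa [Real.norm_eq_abs] using h ω)

lemma my_hoeffding_mgf [IsProbabilityMeasure μ]
    {X : Ω → ℝ} (hX : Measurable X) {c : ℝ} (hc : 0 < c) (hb : ∀ ω, |X ω| ≤ c)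
    (h0 : ∫ ω, X ω ∂μ = 0) (t : ℝ) :
    mgf X μ t ≤ Real.exp (t ^ 2 * c ^ 2 / 2) := by
  have hXi : Integrable X μ := my_integrable_of_abs_le hX.aestronglyMeasurable hb
  have hpt : ∀ ω, Real.exp (t * X ω) ≤ Real.cosh (t * c) + (Real.sinh (t * c) / c) * X ω := by
    intro ω
    have h1 : |X ω / c| ≤ 1 := by
      rw [abs_div, abs_of_pos hc]
      exact div_le_one_of_le₀ (hb ω) hc.le
    have h2 := Real.exp_mul_le_cosh_add_mul_sinh h1 (t * c)
    have h3 : X ω / c * (t * c) = t * X ω := by field_simp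
    rw [h3] at h2
    calc Real.exp (t * X ω) ≤ Real.cosh (t * c) + X ω / c * Real.sinh (t * c) := h2
      _ = Real.cosh (t * c) + (Real.sinh (t * c) / c) * X ω := by ring
  have hint1 : Integrable (fun ω => Real.exp (t * X ω)) μ :=
    my_integrable_of_abs_le ((hX.const_mul t).exp).aestronglyMeasurable
      (C := Real.exp (|t| * c)) fun ω => by
        rw [abs_of_pos (Real.exp_pos _)]
        refine Real.exp_le_exp.mpr ?_
        calc t * X ω ≤ |t * X ω| := le_abs_self _
          _ = |t| * |X ω| := abs_mul _ _
          _ ≤ |t| * c := mul_le_mul_of_nonneg_left (hb ω) (abs_nonneg t)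
  have hint2 : Integrable (fun ω => Real.cosh (t * c) + (Real.sinh (t * c) / c) * X ω) μ :=
    (integrable_const _).add (hXi.const_mul _)
  calc mgf X μ t = ∫ ω, Real.exp (t * X ω) ∂μ := rfl
    _ ≤ ∫ ω, (Real.cosh (t * c) + (Real.sinh (t * c) / c) * X ω) ∂μ :=
        integral_mono hint1 hint2 hpt
    _ = Real.cosh (t * c) + (Real.sinh (t * c) / c) * ∫ ω, X ω ∂μ := by
        rw [integral_add (integrable_const _) (hXi.const_mul _), integral_const,
          MeasureTheory.integral_const_mul]
        simp
    _ = Real.cosh (t * c) := by rw [h0]; ring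
    _ ≤ Real.exp ((t * c) ^ 2 / 2) := Real.cosh_le_exp_half_sq _
    _ = Real.exp (t ^ 2 * c ^ 2 / 2) := by rw [mul_pow]

lemma my_chernoff_bound {ι : Type*} [IsProbabilityMeasure μ]
    (X : ι → Ω → ℝ) (h_indep : iIndepFun X μ)
    (h_meas : ∀ i, Measurable (X i)) (s : Finset ι) (c : ι → ℝ)
    (hc : ∀ i ∈ s, 0 < c i) (hb : ∀ i ∈ s, ∀ ω, |X i ω| ≤ c i)
    (h0 : ∀ i ∈ s, ∫ ω, X i ω ∂μ = 0) {x V : ℝ} (hx : 0 < x)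
    (hV : ∑ i ∈ s, c i ^ 2 ≤ V) (hV0 : 0 < V) :
    (μ {ω | x ≤ ∑ i ∈ s, X i ω}).toReal ≤ Real.exp (-(x ^ 2) / (2 * V)) := by
  set t := x / V with ht
  have ht0 : 0 ≤ t := div_nonneg hx.le hV0.le
  have hint : ∀ i ∈ s, Integrable (fun ω => Real.exp (t * X i ω)) μ := fun i hi =>
    my_integrable_of_abs_le (((h_meas i).const_mul t).exp).aestronglyMeasurable
      (C := Real.exp (|t| * c i)) fun ω => by
        rw [abs_of_pos (Real.exp_pos _)]
        refine Real.exp_le_exp.mpr ?_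
        calc t * X i ω ≤ |t * X i ω| := le_abs_self _
          _ = |t| * |X i ω| := abs_mul _ _
          _ ≤ |t| * c i := mul_le_mul_of_nonneg_left (hb i hi ω) (abs_nonneg t)
  have hmg := measure_ge_le_exp_mul_mgf (μ := μ) (X := ∑ i ∈ s, X i) x ht0
      (h_indep.integrable_exp_mul_sum h_meas hint)
  have hset : {ω | x ≤ (∑ i ∈ s, X i) ω} = {ω | x ≤ ∑ i ∈ s, X i ω} := by
    simp only [Finset.sum_apply]
  rw [hset] at hmg
  refine hmg.trans ?_
  have hmgf : mgf (∑ i ∈ s, X i) μ t ≤ Real.exp (t ^ 2 * V / 2) := by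
    rw [h_indep.mgf_sum h_meas]
    calc ∏ i ∈ s, mgf (X i) μ t ≤ ∏ i ∈ s, Real.exp (t ^ 2 * c i ^ 2 / 2) :=
          Finset.prod_le_prod (fun i _ => mgf_nonneg) fun i hi =>
            my_hoeffding_mgf (h_meas i) (hc i hi) (hb i hi) (h0 i hi) t
      _ = Real.exp (∑ i ∈ s, t ^ 2 * c i ^ 2 / 2) := by rw [Real.exp_sum]
      _ ≤ Real.exp (t ^ 2 * V / 2) := by
          refine Real.exp_le_exp.mpr ?_
          have h1 : ∑ i ∈ s, t ^ 2 * c i ^ 2 / 2 = t ^ 2 / 2 * ∑ i ∈ s, c i ^ 2 := by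
            rw [Finset.mul_sum]
            exact Finset.sum_congr rfl fun i _ => by ring
          rw [h1]
          calc t ^ 2 / 2 * ∑ i ∈ s, c i ^ 2 ≤ t ^ 2 / 2 * V := by
                have := sq_nonneg t
                gcongr
            _ = t ^ 2 * V / 2 := by ring
  calc Real.exp (-t * x) * mgf (∑ i ∈ s, X i) μ t
      ≤ Real.exp (-t * x) * Real.exp (t ^ 2 * V / 2) := by
        have := Real.exp_pos (-t * x)
        gcongr
    _ = Real.exp (-t * x + t ^ 2 * V / 2) := (Real.exp_add _ _).symm
    _ = Real.exp (-(x ^ 2) / (2 * V)) := by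
        congr 1
        rw [ht]
        field_simp
        ring

end Prob

/-! ### A Chebyshev–Mertens type upper bound: `∑_{p ≤ N} 1/p ≤ 7 + 4 log log N` -/

lemma my_chebyshev_sum_log (n : ℕ) :
    ∑ p ∈ (Finset.range (n + 1)).filter Nat.Prime, Real.log p ≤ n * Real.log 4 := by
  have h1 : ∑ p ∈ (Finset.range (n + 1)).filter Nat.Prime, Real.log p
      = Real.log ((primorial n : ℕ) : ℝ) := by
    rw [primorial, Nat.cast_prod, Real.log_prod]
    intro p hp
    exact_mod_cast (Nat.Prime.pos (Finset.mem_filter.mp hp).2).ne'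
  rw [h1]
  calc Real.log ((primorial n : ℕ) : ℝ) ≤ Real.log ((4 : ℝ) ^ n) := by
        have h2 : (0:ℝ) < ((primorial n : ℕ) : ℝ) := by exact_mod_cast primorial_pos n
        have h3 : ((primorial n : ℕ) : ℝ) ≤ (4:ℝ) ^ n := by exact_mod_cast primorial_le_4_pow n
        exact Real.log_le_log h2 h3
    _ = n * Real.log 4 := by rw [Real.log_pow]

lemma my_block_sum_le {m : ℕ} (hm : 2 ≤ m) :
    ∑ p ∈ (Finset.Ioc m (2 * m)).filter Nat.Prime, (1 : ℝ) / p
      ≤ 4 * Real.log 2 / Real.log m := by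
  have hm0 : (0:ℝ) < m := by positivity
  have hm1 : (1:ℝ) < m := by exact_mod_cast hm
  have hlogm : 0 < Real.log m := Real.log_pos hm1
  have h1 : ∑ p ∈ (Finset.Ioc m (2 * m)).filter Nat.Prime, (1 : ℝ) / p
      ≤ ∑ p ∈ (Finset.Ioc m (2 * m)).filter Nat.Prime, Real.log p / (m * Real.log m) := by
    apply Finset.sum_le_sum
    intro p hp
    obtain ⟨hp1, hp2⟩ := Finset.mem_filter.mp hp
    obtain ⟨hpl, hpu⟩ := Finset.mem_Ioc.mp hp1
    have hpm : (m:ℝ) ≤ p := by exact_mod_cast hpl.le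
    have hp0 : (0:ℝ) < p := lt_of_lt_of_le hm0 hpm
    have hlogp : Real.log m ≤ Real.log p := Real.log_le_log hm0 hpm
    rw [div_le_div_iff₀ hp0 (by positivity)]
    calc 1 * (m * Real.log m) = m * Real.log m := by ring
      _ ≤ p * Real.log p := by
          apply mul_le_mul hpm hlogp hlogm.le hp0.le
      _ = Real.log p * p := by ring
  have h2 : ∑ p ∈ (Finset.Ioc m (2 * m)).filter Nat.Prime, Real.log p
      ≤ (2 * m) * Real.log 4 := by
    refine le_trans (Finset.sum_le_sum_of_subset_of_nonneg
      (t := (Finset.range (2 * m + 1)).filter Nat.Prime) ?_ ?_) ?_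
    · refine Finset.filter_subset_filter _ ?_
      intro p hp
      have := (Finset.mem_Ioc.mp hp).2
      exact Finset.mem_range.mpr (by omega)
    · intro p hp _
      have hp2 := (Finset.mem_filter.mp hp).2.one_lt
      exact Real.log_nonneg (by exact_mod_cast hp2.le)
    · exact_mod_cast my_chebyshev_sum_log (2 * m)
  calc ∑ p ∈ (Finset.Ioc m (2 * m)).filter Nat.Prime, (1 : ℝ) / p
      ≤ ∑ p ∈ (Finset.Ioc m (2 * m)).filter Nat.Prime, Real.log p / (m * Real.log m) := h1
    _ = (∑ p ∈ (Finset.Ioc m (2 * m)).filter Nat.Prime, Real.log p) / (m * Real.log m) := by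
        rw [Finset.sum_div]
    _ ≤ ((2 * m) * Real.log 4) / (m * Real.log m) := by
        apply div_le_div_of_nonneg_right h2 (by positivity) |>.trans_eq rfl
    _ = 4 * Real.log 2 / Real.log m := by
        have h4 : Real.log 4 = 2 * Real.log 2 := by
          rw [show (4:ℝ) = 2 ^ 2 by norm_num, Real.log_pow]
          norm_num
        rw [h4]
        field_simp
        ring

lemma my_sum_primes_pow2 (J : ℕ) :
    ∑ p ∈ (Finset.Icc 1 (2 ^ (J + 1))).filter Nat.Prime, (1 : ℝ) / p
      ≤ 1 / 2 + ∑ j ∈ Finset.Icc 1 J, 4 / (j : ℝ) := by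
  induction J with
  | zero =>
    have h : (Finset.Icc 1 (2 ^ 1)).filter Nat.Prime = {2} := by decide
    rw [h]
    norm_num
  | succ J ih =>
    have h1 : (1:ℕ) ≤ 2 ^ (J + 1) := Nat.one_le_two_pow
    have h2 : (2:ℕ) ^ (J + 1) ≤ 2 ^ (J + 2) := Nat.pow_le_pow_right (by norm_num) (by omega)
    have hsplit : Finset.Icc 1 (2 ^ (J + 2)) =
        Finset.Icc 1 (2 ^ (J + 1)) ∪ Finset.Ioc (2 ^ (J + 1)) (2 ^ (J + 2)) := by
      ext p
      simp only [Finset.mem_Icc, Finset.mem_Ioc, Finset.mem_union]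
      omega
    have hdisj : Disjoint ((Finset.Icc 1 (2 ^ (J + 1))).filter Nat.Prime)
        ((Finset.Ioc (2 ^ (J + 1)) (2 ^ (J + 2))).filter Nat.Prime) := by
      apply Finset.disjoint_filter_filter
      rw [Finset.disjoint_left]
      intro p hp hq
      exact absurd (Finset.mem_Icc.mp hp).2 (not_le.mpr (Finset.mem_Ioc.mp hq).1)
    rw [hsplit, Finset.filter_union, Finset.sum_union hdisj]
    have hblock : ∑ p ∈ (Finset.Ioc (2 ^ (J + 1)) (2 ^ (J + 2))).filter Nat.Prime, (1:ℝ) / p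
        ≤ 4 / (J + 1 : ℝ) := by
      have hb := my_block_sum_le (m := 2 ^ (J + 1)) (by
        calc 2 = 2 ^ 1 := by norm_num
          _ ≤ 2 ^ (J + 1) := Nat.pow_le_pow_right (by norm_num) (by omega))
      have heq : 2 * 2 ^ (J + 1) = 2 ^ (J + 2) := by ring
      rw [heq] at hb
      refine hb.trans ?_
      have hlog : Real.log ((2:ℕ) ^ (J + 1) : ℕ) = (J + 1 : ℝ) * Real.log 2 := by
        push_cast
        rw [Real.log_pow]
        push_cast
        ring
      rw [hlog]
      rw [div_le_div_iff₀ (by positivity) (by positivity)]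
      have hl2 : 0 < Real.log 2 := Real.log_pos (by norm_num)
      ring_nf
      nlinarith [hl2]
    have hsum : ∑ j ∈ Finset.Icc 1 (J + 1), 4 / (j : ℝ)
        = (∑ j ∈ Finset.Icc 1 J, 4 / (j : ℝ)) + 4 / (J + 1 : ℝ) := by
      rw [Finset.sum_Icc_succ_top (by omega)]
      push_cast
      ring_nf
    rw [hsum]
    push_cast at hblock ⊢
    linarith

lemma my_mertens_upper {N : ℕ} (hN : 2 ≤ N) :
    ∑ p ∈ (Finset.Icc 1 N).filter Nat.Prime, (1 : ℝ) / p
      ≤ 7 + 4 * Real.log (Real.log N) := by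
  set J := Nat.log 2 N with hJdef
  have hN0 : N ≠ 0 := by omega
  have hJ1 : 1 ≤ J := (Nat.le_log_iff_pow_le (by norm_num) hN0).mpr (by simpa using hN)
  have h2J : 2 ^ J ≤ N := Nat.pow_log_le_self 2 hN0
  have hN2 : N ≤ 2 ^ (J + 1) := (Nat.lt_pow_succ_log_self (by norm_num) N).le
  have hmono : ∑ p ∈ (Finset.Icc 1 N).filter Nat.Prime, (1:ℝ)/p
      ≤ ∑ p ∈ (Finset.Icc 1 (2 ^ (J + 1))).filter Nat.Prime, (1:ℝ)/p := by
    apply Finset.sum_le_sum_of_subset_of_nonneg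
    · exact Finset.filter_subset_filter _ (Finset.Icc_subset_Icc_right hN2)
    · intro p hp _
      have := (Finset.mem_filter.mp hp).2.pos
      positivity
  have hharm : ∑ j ∈ Finset.Icc 1 J, 4 / (j : ℝ) = 4 * (harmonic J : ℝ) := by
    rw [harmonic_eq_sum_Icc]
    push_cast
    rw [Finset.mul_sum]
    exact Finset.sum_congr rfl fun j _ => by ring
  have hh : (harmonic J : ℝ) ≤ 1 + Real.log J := harmonic_le_one_add_log J
  have hlogN : 0 < Real.log N := Real.log_pos (by exact_mod_cast hN)
  have hl2 : 0 < Real.log 2 := Real.log_pos (by norm_num)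
  have hJle : (J : ℝ) ≤ Real.log N / Real.log 2 := by
    rw [le_div_iff₀ hl2]
    calc (J : ℝ) * Real.log 2 = Real.log ((2:ℝ) ^ J) := by rw [Real.log_pow]
      _ ≤ Real.log N := Real.log_le_log (by positivity) (by exact_mod_cast h2J)
  have hJ0 : (0:ℝ) < J := by exact_mod_cast hJ1
  have hlogJ : Real.log J ≤ Real.log (Real.log N) - Real.log (Real.log 2) := by
    calc Real.log J ≤ Real.log (Real.log N / Real.log 2) := Real.log_le_log hJ0 hJle
      _ = _ := Real.log_div hlogN.ne' hl2.ne'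
  have hlog2 : -Real.log (Real.log 2) ≤ 1 / 2 := by
    have h1 : -Real.log (Real.log 2) = Real.log (Real.log 2)⁻¹ := (Real.log_inv _).symm
    rw [h1]
    have h2 : (Real.log 2)⁻¹ ≤ 3 / 2 := by
      rw [inv_le_comm₀ hl2 (by norm_num)]
      have := Real.log_two_gt_d9
      linarith
    calc Real.log (Real.log 2)⁻¹ ≤ Real.log (3 / 2) := Real.log_le_log (by positivity) h2
      _ ≤ 3 / 2 - 1 := Real.log_le_sub_one_of_pos (by norm_num)
      _ = 1 / 2 := by norm_num
  calc ∑ p ∈ (Finset.Icc 1 N).filter Nat.Prime, (1:ℝ)/p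
      ≤ 1 / 2 + ∑ j ∈ Finset.Icc 1 J, 4 / (j : ℝ) := hmono.trans (my_sum_primes_pow2 J)
    _ = 1 / 2 + 4 * (harmonic J : ℝ) := by rw [hharm]
    _ ≤ 1 / 2 + 4 * (1 + Real.log J) := by linarith
    _ ≤ 7 + 4 * Real.log (Real.log N) := by linarith

/-! ### Integrals against the Steinhaus measure -/

lemma my_integral_steinhaus (g : ℂ → ℝ) (hg : Continuous g) :
    ∫ z, g z ∂steinhausMeasure
      = (2 * Real.pi)⁻¹ * ∫ θ in (0:ℝ)..(2 * Real.pi), g (Complex.exp (Complex.I * θ)) := by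
  have hφ : Measurable fun θ : ℝ => Complex.exp (Complex.I * θ) :=
    Complex.measurable_exp.comp (measurable_const.mul Complex.measurable_ofReal)
  rw [steinhausMeasure, integral_map hφ.aemeasurable hg.aestronglyMeasurable,
    integral_smul_measure, intervalIntegral.integral_of_le (by positivity),
    ENNReal.toReal_inv, ENNReal.toReal_ofReal (by positivity), smul_eq_mul]

lemma my_integral_cos_zero : ∫ θ in (0:ℝ)..(2 * Real.pi), Real.cos θ = 0 := by
  rw [integral_cos]
  simp [Real.sin_two_pi]

lemma my_integral_cos_two_zero : ∫ θ in (0:ℝ)..(2 * Real.pi), Real.cos (2 * θ) = 0 := by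
  have h := intervalIntegral.integral_comp_mul_left (a := (0:ℝ)) (b := 2 * Real.pi)
    (f := Real.cos) (c := 2) two_ne_zero
  rw [h, integral_cos]
  have h4 : (2:ℝ) * (2 * Real.pi) = (4:ℕ) * Real.pi := by push_cast; ring
  rw [mul_zero, h4, Real.sin_nat_mul_pi]
  simp

lemma my_re_exp_I (θ : ℝ) : (Complex.exp (Complex.I * θ)).re = Real.cos θ := by
  rw [mul_comm, Complex.exp_mul_I]
  simp [Complex.cos_ofReal_re]

lemma my_re_exp_I_sq (θ : ℝ) : ((Complex.exp (Complex.I * θ)) ^ 2).re = Real.cos (2 * θ) := by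
  have h : (Complex.exp (Complex.I * θ)) ^ 2 = Complex.exp (Complex.I * ((2 * θ : ℝ) : ℂ)) := by
    rw [← Complex.exp_nat_mul]
    congr 1
    push_cast
    ring
  rw [h, my_re_exp_I]

/-! ### The individual summands -/

/-- The summand of the prime sum, as a function of `z = f ω p`. -/
noncomputable def termF (l : ℝ) (k : ℕ) (p : ℕ) (z : ℂ) : ℝ :=
  2 * z.re * Real.log (Tk l (k + 1)) *
      Real.sin (Real.log p / (2 * Real.log (Tk l (k + 1)))) /
      ((p : ℝ) ^ ((1 : ℝ) / 2 + sigmaT l (k + 1)) * Real.log p) +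
    (z ^ 2).re / (2 * (p : ℝ) ^ (1 + 2 * sigmaT l (k + 1)))

lemma termF_eq (l : ℝ) (k : ℕ) (p : ℕ) (z : ℂ) :
    termF l k p z =
      (2 * Real.log (Tk l (k + 1)) *
          Real.sin (Real.log p / (2 * Real.log (Tk l (k + 1)))) /
          ((p : ℝ) ^ ((1 : ℝ) / 2 + sigmaT l (k + 1)) * Real.log p)) * z.re +
        (1 / (2 * (p : ℝ) ^ (1 + 2 * sigmaT l (k + 1)))) * (z ^ 2).re := by
  rw [termF]
  ring

lemma termF_continuous (l : ℝ) (k : ℕ) (p : ℕ) : Continuous (termF l k p) := by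
  unfold termF
  exact ((((continuous_const.mul Complex.continuous_re).mul continuous_const).mul
      continuous_const).div_const _).add
    ((Complex.continuous_re.comp (continuous_pow 2)).div_const _)

lemma termF_measurable (l : ℝ) (k : ℕ) (p : ℕ) : Measurable (termF l k p) :=
  (termF_continuous l k p).measurable

lemma termF_steinhaus_zero (l : ℝ) (k : ℕ) (p : ℕ) :
    ∫ z, termF l k p z ∂steinhausMeasure = 0 := by
  set c1 := 2 * Real.log (Tk l (k + 1)) *
      Real.sin (Real.log p / (2 * Real.log (Tk l (k + 1)))) /
      ((p : ℝ) ^ ((1 : ℝ) / 2 + sigmaT l (k + 1)) * Real.log p) with hc1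
  set c2 := 1 / (2 * (p : ℝ) ^ (1 + 2 * sigmaT l (k + 1))) with hc2
  rw [my_integral_steinhaus _ (termF_continuous l k p)]
  have hcongr : Set.EqOn (fun θ : ℝ => termF l k p (Complex.exp (Complex.I * θ)))
      (fun θ : ℝ => c1 * Real.cos θ + c2 * Real.cos (2 * θ))
      (Set.uIcc (0:ℝ) (2 * Real.pi)) := by
    intro θ _
    simp only
    rw [termF_eq, my_re_exp_I, my_re_exp_I_sq]
  rw [intervalIntegral.integral_congr hcongr]
  rw [intervalIntegral.integral_add
    ((Continuous.intervalIntegrable (by fun_prop) _ _ :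
      IntervalIntegrable (fun θ : ℝ => c1 * Real.cos θ) volume 0 (2 * Real.pi)))
    ((Continuous.intervalIntegrable (by fun_prop) _ _ :
      IntervalIntegrable (fun θ : ℝ => c2 * Real.cos (2 * θ)) volume 0 (2 * Real.pi)))]
  rw [intervalIntegral.integral_const_mul, intervalIntegral.integral_const_mul,
    my_integral_cos_zero, my_integral_cos_two_zero]
  ring

lemma termF_integral_zero {Ω : Type*} [MeasurableSpace Ω] (μ : Measure Ω)
    [IsProbabilityMeasure μ] (f : Ω → ℕ → ℂ) (hf : IsSteinhausRMF μ f)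
    (l : ℝ) (k : ℕ) (p : ℕ) (hp : p.Prime) :
    ∫ ω, termF l k p (f ω p) ∂μ = 0 := by
  have h : ∫ ω, termF l k p (f ω p) ∂μ = ∫ z, termF l k p z
      ∂(Measure.map (fun ω => f ω p) μ) :=
    (integral_map (hf.meas p).aemeasurable
      (termF_continuous l k p).aestronglyMeasurable).symm
  rw [h, hf.unif p hp, termF_steinhaus_zero]

lemma termF_bound (l : ℝ) (k : ℕ) (p : ℕ) (hp : p.Prime)
    (hL : 0 < Real.log (Tk l (k + 1))) (hσ : 0 ≤ sigmaT l (k + 1))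
    (z : ℂ) (hz : ‖z‖ = 1) :
    |termF l k p z| ≤ 1 / Real.sqrt p + 1 / (2 * p) := by
  have hp2 : (2:ℝ) ≤ p := by exact_mod_cast hp.two_le
  have hp1 : (1:ℝ) ≤ p := by linarith
  have hp0 : (0:ℝ) < p := by linarith
  have hlogp : 0 < Real.log p := Real.log_pos (by linarith)
  set L := Real.log (Tk l (k + 1)) with hLdef
  set σ := sigmaT l (k + 1) with hσdef
  have hP1 : (0:ℝ) < (p : ℝ) ^ ((1:ℝ)/2 + σ) := Real.rpow_pos_of_pos hp0 _
  have hP2 : (0:ℝ) < (p : ℝ) ^ (1 + 2 * σ) := Real.rpow_pos_of_pos hp0 _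
  have hzre : |z.re| ≤ 1 := by
    rw [← hz]
    exact Complex.abs_re_le_norm z
  have hz2 : |(z ^ 2).re| ≤ 1 := by
    calc |(z ^ 2).re| ≤ ‖z ^ 2‖ := Complex.abs_re_le_norm _
      _ = ‖z‖ ^ 2 := by rw [norm_pow]
      _ = 1 := by rw [hz]; norm_num
  have hS : |Real.sin (Real.log p / (2 * L))| ≤ Real.log p / (2 * L) := by
    refine Real.abs_sin_le_abs.trans_eq (abs_of_nonneg ?_)
    positivity
  have h1 : |2 * z.re * L * Real.sin (Real.log p / (2 * L)) /
      ((p : ℝ) ^ ((1:ℝ)/2 + σ) * Real.log p)| ≤ 1 / Real.sqrt p := by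
    rw [abs_div, abs_of_pos (mul_pos hP1 hlogp)]
    have hnum : |2 * z.re * L * Real.sin (Real.log p / (2 * L))| ≤ Real.log p := by
      rw [abs_mul, abs_mul, abs_mul]
      have habs2 : |(2:ℝ)| = 2 := by norm_num
      have habsL : |L| = L := abs_of_pos hL
      rw [habs2, habsL]
      calc 2 * |z.re| * L * |Real.sin (Real.log p / (2 * L))|
          ≤ 2 * 1 * L * (Real.log p / (2 * L)) := by
            apply mul_le_mul ?_ hS (abs_nonneg _) (by positivity)
            apply mul_le_mul_of_nonneg_right ?_ hL.le
            apply mul_le_mul_of_nonneg_left hzre (by norm_num)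
        _ = Real.log p := by field_simp
    calc |2 * z.re * L * Real.sin (Real.log p / (2 * L))| /
          ((p : ℝ) ^ ((1:ℝ)/2 + σ) * Real.log p)
        ≤ Real.log p / ((p : ℝ) ^ ((1:ℝ)/2 + σ) * Real.log p) := by gcongr
      _ = 1 / (p : ℝ) ^ ((1:ℝ)/2 + σ) := by
          rw [div_eq_div_iff (mul_pos hP1 hlogp).ne' hP1.ne']
          ring
      _ ≤ 1 / Real.sqrt p := by
          rw [Real.sqrt_eq_rpow]
          apply one_div_le_one_div_of_le (Real.rpow_pos_of_pos hp0 _)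
          apply Real.rpow_le_rpow_of_exponent_le hp1
          linarith
  have h2 : |(z ^ 2).re / (2 * (p : ℝ) ^ (1 + 2 * σ))| ≤ 1 / (2 * p) := by
    rw [abs_div, abs_of_pos (mul_pos two_pos hP2)]
    calc |(z ^ 2).re| / (2 * (p : ℝ) ^ (1 + 2 * σ))
        ≤ 1 / (2 * (p : ℝ) ^ (1 + 2 * σ)) := by gcongr
      _ ≤ 1 / (2 * p) := by
          apply one_div_le_one_div_of_le (by positivity)
          have : (p:ℝ) = (p:ℝ) ^ (1:ℝ) := (Real.rpow_one _).symm
          nth_rewrite 1 [this]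
          have hple : (p:ℝ) ^ (1:ℝ) ≤ (p:ℝ) ^ (1 + 2 * σ) :=
            Real.rpow_le_rpow_of_exponent_le hp1 (by linarith)
          linarith
  calc |termF l k p z| ≤ |2 * z.re * L * Real.sin (Real.log p / (2 * L)) /
        ((p : ℝ) ^ ((1:ℝ)/2 + σ) * Real.log p)| +
        |(z ^ 2).re / (2 * (p : ℝ) ^ (1 + 2 * σ))| := abs_add_le _ _
    _ ≤ 1 / Real.sqrt p + 1 / (2 * p) := add_le_add h1 h2

/-- For any `ε > 0` there exists `λ₀ > 1` such that for every `λ ≥ λ₀`: with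
`T_k = exp(exp(λ^k))` and `σ_k = log log T_k / log T_k`, almost surely for all
sufficiently large `k` one has
`∑_{p ≤ T_{k-1}} [2 Re f(p) (log T_k) sin(log p/(2 log T_k)) / (p^{1/2+σ_k} log p)
  + Re(f(p)²)/(2 p^{1+2σ_k})] ≤ ε √(log₂ T_k log₄ T_k)` (stated with `k-1, k`
replaced by `k, k+1`). -/
theorem steinhaus_prime_sum_initial_segment_small {Ω : Type*} [MeasurableSpace Ω]
    (μ : Measure Ω) [IsProbabilityMeasure μ] (f : Ω → ℕ → ℂ)
    (hf : IsSteinhausRMF μ f) (ε : ℝ) (hε : 0 < ε) :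
    ∃ l₀ : ℝ, 1 < l₀ ∧ ∀ l : ℝ, l₀ ≤ l →
      ∀ᵐ ω ∂μ, ∀ᶠ k : ℕ in atTop,
        ∑ p ∈ (Finset.Icc 1 ⌊Tk l k⌋₊).filter Nat.Prime,
            (2 * (f ω p).re * Real.log (Tk l (k + 1)) *
                Real.sin (Real.log p / (2 * Real.log (Tk l (k + 1)))) /
                ((p : ℝ) ^ ((1 : ℝ) / 2 + sigmaT l (k + 1)) * Real.log p) +
              ((f ω p) ^ 2).re / (2 * (p : ℝ) ^ (1 + 2 * sigmaT l (k + 1)))) ≤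
          ε * Real.sqrt (llog (Tk l (k + 1)) * llllog (Tk l (k + 1))) := by
  classical
  refine ⟨max 3 (140 / ε ^ 2), lt_of_lt_of_le (by norm_num) (le_max_left _ _), ?_⟩
  intro l hl
  have hl3 : (3:ℝ) ≤ l := le_trans (le_max_left _ _) hl
  have hl0 : (0:ℝ) < l := by linarith
  have hl1 : (1:ℝ) ≤ l := by linarith
  have hεl : 140 ≤ ε ^ 2 * l := by
    have hlε : 140 / ε ^ 2 ≤ l := le_trans (le_max_right _ _) hl
    rw [div_le_iff₀ (by positivity)] at hlε
    linarith
  have hlogl : 1 < Real.log l := by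
    rw [Real.lt_log_iff_exp_lt hl0]
    calc Real.exp 1 < 2.7182818286 := Real.exp_one_lt_d9
      _ ≤ 3 := by norm_num
      _ ≤ l := hl3
  have hlk1 : ∀ k : ℕ, (1:ℝ) ≤ l ^ k := fun k => one_le_pow₀ hl1
  have hTk_log : ∀ k, Real.log (Tk l k) = Real.exp (l ^ k) := fun k => by
    rw [Tk, Real.log_exp]
  have hTk_llog : ∀ k, Real.log (Real.log (Tk l k)) = l ^ k := fun k => by
    rw [hTk_log, Real.log_exp]
  have hσ0 : ∀ k, 0 ≤ sigmaT l k := fun k => by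
    rw [sigmaT, hTk_llog, hTk_log]
    exact div_nonneg (le_trans zero_le_one (hlk1 k)) (Real.exp_pos _).le
  have hL : ∀ k, 0 < Real.log (Tk l k) := fun k => by
    rw [hTk_log]; exact Real.exp_pos _
  have hllog : ∀ k, llog (Tk l k) = l ^ k := fun k => by rw [llog, hTk_llog]
  have hllll : ∀ k : ℕ, llllog (Tk l (k + 1)) = Real.log (((k:ℝ) + 1) * Real.log l) := by
    intro k
    rw [llllog, Tk, Real.log_exp, Real.log_exp, Real.log_pow]
    push_cast
    ring_nf
  have hG1 : ∀ k : ℕ, 1 < ((k:ℝ) + 1) * Real.log l := by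
    intro k
    calc (1:ℝ) < Real.log l := hlogl
      _ = 1 * Real.log l := (one_mul _).symm
      _ ≤ ((k:ℝ) + 1) * Real.log l := by
          apply mul_le_mul_of_nonneg_right ?_ (by linarith)
          have : (0:ℝ) ≤ (k:ℝ) := Nat.cast_nonneg k
          linarith
  have hG0 : ∀ k : ℕ, 0 < Real.log (((k:ℝ) + 1) * Real.log l) :=
    fun k => Real.log_pos (hG1 k)
  set A : ℕ → Set Ω := fun k => {ω | ¬ (∑ p ∈ (Finset.Icc 1 ⌊Tk l k⌋₊).filter Nat.Prime,
      termF l k p (f ω p) ≤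
      ε * Real.sqrt (llog (Tk l (k + 1)) * llllog (Tk l (k + 1))))} with hA
  have key : ∀ k : ℕ, μ (A k) ≤ ENNReal.ofReal (1 / ((k:ℝ) + 1) ^ 2) := by
    intro k
    set N := ⌊Tk l k⌋₊ with hN
    set x := ε * Real.sqrt (llog (Tk l (k + 1)) * llllog (Tk l (k + 1))) with hxdef
    have hTkpos : (0:ℝ) < Tk l k := Real.exp_pos _
    have hTk2 : (2:ℝ) ≤ Tk l k := by
      rw [Tk]
      have he1 : (1:ℝ) ≤ Real.exp (l ^ k) :=
        Real.one_le_exp (le_trans zero_le_one (hlk1 k))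
      calc (2:ℝ) ≤ Real.exp 1 := by
            have := Real.exp_one_gt_d9
            linarith
        _ ≤ Real.exp (Real.exp (l ^ k)) := Real.exp_le_exp.mpr he1
    have hN2 : 2 ≤ N := Nat.le_floor (by exact_mod_cast hTk2)
    have hNr : (2:ℝ) ≤ (N:ℝ) := by exact_mod_cast hN2
    have hNle : (N:ℝ) ≤ Tk l k := Nat.floor_le hTkpos.le
    have hlogN0 : 0 < Real.log N := Real.log_pos (by linarith)
    have hllogN : Real.log (Real.log N) ≤ l ^ k := by
      calc Real.log (Real.log N) ≤ Real.log (Real.log (Tk l k)) :=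
            Real.log_le_log hlogN0 (Real.log_le_log (by linarith) hNle)
        _ = l ^ k := hTk_llog k
    set X : {q : ℕ // q.Prime} → Ω → ℝ := fun i ω => termF l k i.1 (f ω i.1) with hX
    set cB : {q : ℕ // q.Prime} → ℝ := fun i => 1 / Real.sqrt i.1 + 1 / (2 * i.1) with hcB
    set s : Finset {q : ℕ // q.Prime} := (Finset.Icc 1 N).subtype Nat.Prime with hs
    have h_indep : iIndepFun X μ :=
      hf.indep.comp (fun i => termF l k i.1) (fun i => termF_measurable l k i.1)
    have h_meas : ∀ i, Measurable (X i) :=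
      fun i => (termF_measurable l k i.1).comp (hf.meas i.1)
    have hx0 : 0 < x := by
      apply mul_pos hε
      apply Real.sqrt_pos.mpr
      rw [hllog (k + 1), hllll k]
      exact mul_pos (lt_of_lt_of_le one_pos (hlk1 (k + 1))) (hG0 k)
    have hVle : ∑ i ∈ s, cB i ^ 2 ≤ 33 * l ^ k := by
      have hstep : ∀ i ∈ s, cB i ^ 2 ≤ 3 * (1 / (i.1 : ℝ)) := by
        intro i _
        have hp2 : (2:ℝ) ≤ i.1 := by exact_mod_cast i.2.two_le
        have hp0 : (0:ℝ) < i.1 := by linarith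
        have hsq : Real.sqrt i.1 ^ 2 = (i.1:ℝ) := Real.sq_sqrt (by linarith)
        have hs1 : (1:ℝ) ≤ Real.sqrt i.1 := by
          rw [show (1:ℝ) = Real.sqrt 1 from Real.sqrt_one.symm]
          exact Real.sqrt_le_sqrt (by linarith)
        have hsp : (0:ℝ) < Real.sqrt i.1 := by linarith
        have hself : Real.sqrt i.1 ≤ (i.1:ℝ) := by
          have h := Real.sqrt_le_sqrt (show (i.1:ℝ) ≤ (i.1:ℝ) ^ 2 by nlinarith)
          rwa [Real.sqrt_sq hp0.le] at h
        have hcle : cB i ≤ (3 / 2) / Real.sqrt i.1 := by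
          rw [hcB]
          simp only
          have h1 : 1 / (2 * (i.1:ℝ)) ≤ 1 / (2 * Real.sqrt i.1) :=
            one_div_le_one_div_of_le (by linarith) (by linarith)
          have h2 : 1 / Real.sqrt i.1 + 1 / (2 * Real.sqrt i.1)
              = (3 / 2) / Real.sqrt i.1 := by
            field_simp
            ring
          linarith
        have hc0 : 0 ≤ cB i := by
          rw [hcB]
          positivity
        calc cB i ^ 2 ≤ ((3 / 2) / Real.sqrt i.1) ^ 2 := by
              apply pow_le_pow_left₀ hc0 hcle
          _ = (9 / 4) * (1 / (i.1:ℝ)) := by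
              rw [div_pow, hsq]
              ring
          _ ≤ 3 * (1 / (i.1:ℝ)) := by
              apply mul_le_mul_of_nonneg_right (by norm_num) (by positivity)
      calc ∑ i ∈ s, cB i ^ 2 ≤ ∑ i ∈ s, 3 * (1 / (i.1 : ℝ)) := Finset.sum_le_sum hstep
        _ = ∑ p ∈ (Finset.Icc 1 N).filter Nat.Prime, 3 * ((1:ℝ) / p) := by
            rw [hs]
            exact Finset.sum_subtype_eq_sum_filter (fun p : ℕ => 3 * ((1:ℝ) / p))
        _ = 3 * ∑ p ∈ (Finset.Icc 1 N).filter Nat.Prime, (1:ℝ) / p := by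
            rw [Finset.mul_sum]
        _ ≤ 3 * (7 + 4 * Real.log (Real.log N)) :=
            mul_le_mul_of_nonneg_left (my_mertens_upper hN2) (by norm_num)
        _ ≤ 33 * l ^ k := by nlinarith [hlk1 k, hllogN]
    have hV0 : (0:ℝ) < 33 * l ^ k := by
      have := hlk1 k
      linarith
    have hcher := my_chernoff_bound (μ := μ) X h_indep h_meas s cB
      (fun i _ => by
        have hp0 : (0:ℝ) < i.1 := by exact_mod_cast i.2.pos
        rw [hcB]
        positivity)
      (fun i _ ω => termF_bound l k i.1 i.2 (hL (k + 1)) (hσ0 (k + 1)) (f ω i.1)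
        (hf.norm_prime ω i.1 i.2))
      (fun i _ => termF_integral_zero μ f hf l k i.1 i.2)
      hx0 hVle hV0
    have hx2 : x ^ 2 = ε ^ 2 * (l ^ (k + 1) * Real.log (((k:ℝ) + 1) * Real.log l)) := by
      rw [hxdef, mul_pow, Real.sq_sqrt ?_, hllog (k + 1), hllll k]
      apply mul_nonneg
      · rw [hllog (k + 1)]
        exact le_trans zero_le_one (hlk1 (k + 1))
      · rw [hllll k]
        exact (hG0 k).le
    have hexp_ge : 2 * Real.log ((k:ℝ) + 1) ≤ x ^ 2 / (2 * (33 * l ^ k)) := by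
      have hGk : Real.log ((k:ℝ) + 1) ≤ Real.log (((k:ℝ) + 1) * Real.log l) := by
        apply Real.log_le_log (by positivity)
        nth_rewrite 1 [show ((k:ℝ) + 1) = ((k:ℝ) + 1) * 1 by ring]
        apply mul_le_mul_of_nonneg_left hlogl.le (by positivity)
      have hlk0 : (0:ℝ) < l ^ k := lt_of_lt_of_le one_pos (hlk1 k)
      have heq : x ^ 2 / (2 * (33 * l ^ k))
          = (ε ^ 2 * l / 66) * Real.log (((k:ℝ) + 1) * Real.log l) := by
        rw [hx2, pow_succ]
        field_simp
        ring
      rw [heq]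
      have h66 : (2:ℝ) ≤ ε ^ 2 * l / 66 := by linarith
      calc 2 * Real.log ((k:ℝ) + 1) ≤ 2 * Real.log (((k:ℝ) + 1) * Real.log l) := by
            apply mul_le_mul_of_nonneg_left hGk (by norm_num)
        _ ≤ (ε ^ 2 * l / 66) * Real.log (((k:ℝ) + 1) * Real.log l) :=
            mul_le_mul_of_nonneg_right h66 (hG0 k).le
    have hnum : Real.exp (-(x ^ 2) / (2 * (33 * l ^ k))) ≤ 1 / ((k:ℝ) + 1) ^ 2 := by
      have h1 : Real.exp (-(x ^ 2) / (2 * (33 * l ^ k)))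
          ≤ Real.exp (-(2 * Real.log ((k:ℝ) + 1))) := by
        apply Real.exp_le_exp.mpr
        rw [neg_div]
        linarith
      refine h1.trans ?_
      rw [show (2:ℝ) * Real.log ((k:ℝ) + 1) = Real.log (((k:ℝ) + 1) ^ 2) by
        rw [Real.log_pow]; push_cast; ring]
      rw [Real.exp_neg, Real.exp_log (by positivity), one_div]
    have hAsub : A k ⊆ {ω | x ≤ ∑ i ∈ s, X i ω} := by
      intro ω hω
      simp only [hA, Set.mem_setOf_eq] at hω ⊢
      have hsumeq : ∑ i ∈ s, X i ω
          = ∑ p ∈ (Finset.Icc 1 N).filter Nat.Prime, termF l k p (f ω p) := by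
        rw [hs]
        exact Finset.sum_subtype_eq_sum_filter (fun p : ℕ => termF l k p (f ω p))
      rw [hsumeq]
      exact (not_le.mp hω).le
    calc μ (A k) ≤ μ {ω | x ≤ ∑ i ∈ s, X i ω} := measure_mono hAsub
      _ = ENNReal.ofReal ((μ {ω | x ≤ ∑ i ∈ s, X i ω}).toReal) :=
          (ENNReal.ofReal_toReal (measure_ne_top _ _)).symm
      _ ≤ ENNReal.ofReal (Real.exp (-(x ^ 2) / (2 * (33 * l ^ k)))) :=
          ENNReal.ofReal_le_ofReal hcher
      _ ≤ ENNReal.ofReal (1 / ((k:ℝ) + 1) ^ 2) := ENNReal.ofReal_le_ofReal hnum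
  have hsum : (∑' k, μ (A k)) ≠ ⊤ := by
    have hs2 : Summable (fun k : ℕ => 1 / ((k:ℝ) + 1) ^ 2) := by
      have h := Real.summable_one_div_nat_pow.mpr (le_refl 2)
      have h1 := (summable_nat_add_iff 1).mpr h
      apply h1.congr
      intro n
      push_cast
      ring
    have hle : ∑' k, μ (A k) ≤ ENNReal.ofReal (∑' k : ℕ, 1 / ((k:ℝ) + 1) ^ 2) := by
      calc ∑' k, μ (A k) ≤ ∑' k : ℕ, ENNReal.ofReal (1 / ((k:ℝ) + 1) ^ 2) :=
            ENNReal.tsum_le_tsum key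
        _ = ENNReal.ofReal (∑' k : ℕ, 1 / ((k:ℝ) + 1) ^ 2) :=
            (ENNReal.ofReal_tsum_of_nonneg (fun k => by positivity) hs2).symm
    exact ne_top_of_le_ne_top ENNReal.ofReal_ne_top hle
  filter_upwards [MeasureTheory.ae_eventually_notMem hsum] with ω hω
  filter_upwards [hω] with k hk
  have hk2 : ∑ p ∈ (Finset.Icc 1 ⌊Tk l k⌋₊).filter Nat.Prime, termF l k p (f ω p) ≤
      ε * Real.sqrt (llog (Tk l (k + 1)) * llllog (Tk l (k + 1))) := by
    by_contra hcon
    exact hk hcon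
  exact hk2
end
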